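/- arXiv:2310.05904 — 2 statements merged into one kernel-verified Lean document; each statement's English description precedes it below -/
import Mathlib

section
/- Let A be an m×m real symmetric matrix, C an ℓ×ℓ real symmetric positive definite matrix, B an m×ℓ real matrix, and let ρ, ξ_L, ξ_H be real numbers with ξ_L² < λ_min(C). Then, in the Loewner order, A + ξ_H²·I − ρ²·B·(C + ξ_L²·I)⁻¹·Bᵀ ⪯ A + ξ_H²·I − ρ²·B·C⁻¹·Bᵀ + ρ²·ξ_L²·B·C⁻²·Bᵀ. (This is the matrix content of the bound on the conditional covariance of a noisy AR-1 Gaussian process, where A = ρ²·k_L(X_H,X_H) + k_δ(X_H,X_H), B = k_L(X_H,X_L), and C = k_L(X_L,X_L).) -/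
open Matrix

/-- **Conditional covariance bound for a noisy AR-1 GP (matrix content).**
Let `A` be an `m × m` real symmetric matrix, `C` an `ℓ × ℓ` real symmetric positive
definite matrix, `B` an `m × ℓ` real matrix, and `ρ, ξ_L, ξ_H` real numbers with
`ξ_L² < λ_min(C)`.  Then, in the Loewner order,
`A + ξ_H²·I − ρ²·B·(C + ξ_L²·I)⁻¹·Bᵀ ⪯ A + ξ_H²·I − ρ²·B·C⁻¹·Bᵀ + ρ²·ξ_L²·B·C⁻²·Bᵀ`. -/
theorem stmt_5 {m ℓ : ℕ} (A : Matrix (Fin m) (Fin m) ℝ) (hA : A.IsSymm)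
    (C : Matrix (Fin ℓ) (Fin ℓ) ℝ) (hC : C.PosDef)
    (B : Matrix (Fin m) (Fin ℓ) ℝ) (ρ ξL ξH : ℝ)
    (hξL : ∀ i, ξL ^ 2 < hC.1.eigenvalues i) :
    ((A + ξH ^ 2 • (1 : Matrix (Fin m) (Fin m) ℝ) - ρ ^ 2 • (B * C⁻¹ * Bᵀ)
        + ρ ^ 2 • ξL ^ 2 • (B * (C⁻¹ * C⁻¹) * Bᵀ))
      - (A + ξH ^ 2 • (1 : Matrix (Fin m) (Fin m) ℝ)
        - ρ ^ 2 • (B * (C + ξL ^ 2 • (1 : Matrix (Fin ℓ) (Fin ℓ) ℝ))⁻¹ * Bᵀ))).PosSemidef := by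
  set D : Matrix (Fin ℓ) (Fin ℓ) ℝ := C + ξL ^ 2 • (1 : Matrix (Fin ℓ) (Fin ℓ) ℝ) with hD
  have hDpd : D.PosDef := by
    apply hC.add_posSemidef
    refine PosSemidef.of_dotProduct_mulVec_nonneg ?_ fun x => ?_
    · ext i j
      simp [conjTranspose, Matrix.one_apply, eq_comm]
    · have : star x ⬝ᵥ (ξL ^ 2 • (1 : Matrix (Fin ℓ) (Fin ℓ) ℝ)) *ᵥ x
          = ξL ^ 2 * (star x ⬝ᵥ x) := by
        rw [smul_mulVec, one_mulVec, dotProduct_smul, smul_eq_mul]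
      rw [this]
      exact mul_nonneg (sq_nonneg _) (Finset.sum_nonneg fun i _ => by
        simpa using mul_self_nonneg (x i))
  have hCunit : IsUnit C.det := hC.det_pos.ne'.isUnit
  have hDunit : IsUnit D.det := hDpd.det_pos.ne'.isUnit
  have hCCi : C * C⁻¹ = 1 := Matrix.mul_nonsing_inv _ hCunit
  have hCiC : C⁻¹ * C = 1 := Matrix.nonsing_inv_mul _ hCunit
  have hDDi : D * D⁻¹ = 1 := Matrix.mul_nonsing_inv _ hDunit
  have hDiD : D⁻¹ * D = 1 := Matrix.nonsing_inv_mul _ hDunit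
  have hcomm : C * D = D * C := by
    simp [hD, Matrix.mul_add, Matrix.add_mul, Matrix.mul_smul, Matrix.smul_mul]
  have hinvcomm : C⁻¹ * D⁻¹ = D⁻¹ * C⁻¹ := by
    rw [← Matrix.mul_inv_rev, ← Matrix.mul_inv_rev, hcomm]
  have h1 : D⁻¹ - C⁻¹ = -(ξL ^ 2 • (D⁻¹ * C⁻¹)) := by
    have e : D⁻¹ * (C - D) * C⁻¹ = D⁻¹ - C⁻¹ := by
      rw [Matrix.mul_sub, Matrix.sub_mul, Matrix.mul_assoc, hCCi, hDiD]
      simp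
    rw [← e, hD]
    simp [Matrix.mul_smul, Matrix.smul_mul, Matrix.mul_assoc]
  have h2 : C⁻¹ - D⁻¹ = ξL ^ 2 • (D⁻¹ * C⁻¹) := by
    rw [← neg_sub, h1, neg_neg]
  have hkey : D⁻¹ - C⁻¹ + ξL ^ 2 • (C⁻¹ * C⁻¹) = (ξL ^ 2 * ξL ^ 2) • (C⁻¹ * (D⁻¹ * C⁻¹)) := by
    rw [h1, neg_add_eq_sub, ← smul_sub, ← Matrix.sub_mul, h2, Matrix.smul_mul, smul_smul,
      Matrix.mul_assoc]
    congr 1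
    conv_lhs => rw [← Matrix.mul_assoc, ← hinvcomm, Matrix.mul_assoc]
  have hCiH : C⁻¹ᴴ = C⁻¹ := hC.inv.isHermitian
  have hBH : Bᴴ = Bᵀ := by
    ext i j; simp [conjTranspose]
  have expand : ((ρ * ξL ^ 2) • (B * C⁻¹)) * D⁻¹ * ((ρ * ξL ^ 2) • (B * C⁻¹))ᴴ
      = (ρ ^ 2 * (ξL ^ 2 * ξL ^ 2)) • (B * (C⁻¹ * (D⁻¹ * C⁻¹)) * Bᵀ) := by
    rw [conjTranspose_smul, conjTranspose_mul, hCiH, hBH]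
    rw [Matrix.smul_mul, Matrix.smul_mul, Matrix.mul_smul, smul_smul]
    congr 1
    · push_cast; ring_nf; simp [starRingEnd_apply]; ring
    · simp [Matrix.mul_assoc]
  have hmain : ((A + ξH ^ 2 • (1 : Matrix (Fin m) (Fin m) ℝ) - ρ ^ 2 • (B * C⁻¹ * Bᵀ)
        + ρ ^ 2 • ξL ^ 2 • (B * (C⁻¹ * C⁻¹) * Bᵀ))
      - (A + ξH ^ 2 • (1 : Matrix (Fin m) (Fin m) ℝ) - ρ ^ 2 • (B * D⁻¹ * Bᵀ)))
      = ((ρ * ξL ^ 2) • (B * C⁻¹)) * D⁻¹ * ((ρ * ξL ^ 2) • (B * C⁻¹))ᴴ := by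
    rw [expand]
    have e1 : ((A + ξH ^ 2 • (1 : Matrix (Fin m) (Fin m) ℝ) - ρ ^ 2 • (B * C⁻¹ * Bᵀ)
        + ρ ^ 2 • ξL ^ 2 • (B * (C⁻¹ * C⁻¹) * Bᵀ))
      - (A + ξH ^ 2 • (1 : Matrix (Fin m) (Fin m) ℝ) - ρ ^ 2 • (B * D⁻¹ * Bᵀ)))
      = ρ ^ 2 • (B * (D⁻¹ - C⁻¹ + ξL ^ 2 • (C⁻¹ * C⁻¹)) * Bᵀ) := by
      simp only [Matrix.mul_add, Matrix.add_mul, Matrix.mul_sub, Matrix.sub_mul,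
        Matrix.mul_smul, Matrix.smul_mul, smul_add, smul_sub]
      abel
    rw [e1, hkey]
    rw [Matrix.mul_smul, Matrix.smul_mul, smul_smul]
  rw [hmain]
  exact (hDpd.inv.posSemidef).mul_mul_conjTranspose_same _
end

section
/- Let ξ > 0 and v > 0 be real numbers. Then for every real s with 0 ≤ s² ≤ v², one has s² ≤ (v² / log(1 + v²·ξ⁻²)) · log(1 + s²·ξ⁻²). (This scalar inequality, with v² the prior variance of the Gaussian process and ξ² the observation-noise variance, is what allows the sum of squared posterior standard deviations in the UCB regret analysis to be bounded by the information gain, producing the constant C₁ = 8·v²/log(1 + v²·ξ⁻²) in the regret bound R_T ≤ √(C₁·T·β_T·γ̃_T).) -/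
/-- **Scalar inequality behind the constant `C₁` in the UCB regret bound.**
Let `ξ > 0` and `v > 0`.  Then for every real `s` with `0 ≤ s² ≤ v²`,
`s² ≤ (v² / log(1 + v²·ξ⁻²)) · log(1 + s²·ξ⁻²)`. -/
theorem stmt_10 (ξ v : ℝ) (hξ : 0 < ξ) (hv : 0 < v) :
    ∀ s : ℝ, 0 ≤ s ^ 2 → s ^ 2 ≤ v ^ 2 →
      s ^ 2 ≤ (v ^ 2 / Real.log (1 + v ^ 2 * (ξ ^ 2)⁻¹))
                * Real.log (1 + s ^ 2 * (ξ ^ 2)⁻¹) := by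
  intro s _ hsv
  set a := s ^ 2 with ha
  set b := v ^ 2 with hb
  have ha0 : 0 ≤ a := sq_nonneg s
  have hb0 : 0 < b := pow_pos hv 2
  have hc0 : 0 < (ξ ^ 2)⁻¹ := inv_pos.mpr (pow_pos hξ 2)
  set c := (ξ ^ 2)⁻¹ with hcdef
  have hLb : 0 < Real.log (1 + b * c) := by
    apply Real.log_pos
    nlinarith [mul_pos hb0 hc0]
  rcases eq_or_lt_of_le ha0 with h0 | ha0'
  · rw [← h0]
    simp
  -- Bernoulli: (1 + a*c) ^ (b/a) ≥ 1 + (b/a)*(a*c) = 1 + b*c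
  have hp : 1 ≤ b / a := (one_le_div ha0').mpr hsv
  have hber : 1 + (b / a) * (a * c) ≤ (1 + a * c) ^ (b / a) :=
    one_add_mul_self_le_rpow_one_add (by nlinarith [mul_nonneg ha0 hc0.le]) hp
  have heq : (b / a) * (a * c) = b * c := by field_simp
  rw [heq] at hber
  have h1ac : 0 < 1 + a * c := by positivity
  have hlog : Real.log (1 + b * c) ≤ (b / a) * Real.log (1 + a * c) := by
    calc Real.log (1 + b * c) ≤ Real.log ((1 + a * c) ^ (b / a)) :=
          Real.log_le_log (by nlinarith [mul_pos hb0 hc0]) hber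
      _ = (b / a) * Real.log (1 + a * c) := Real.log_rpow h1ac _
  rw [div_mul_eq_mul_div, le_div_iff₀ hLb]
  calc a * Real.log (1 + b * c) ≤ a * ((b / a) * Real.log (1 + a * c)) := by
        exact mul_le_mul_of_nonneg_left hlog ha0
    _ = b * Real.log (1 + a * c) := by field_simp
end
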